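/- Let X_1,…,X_n be independent uniformly random points in the unit square [0,1]², let r_n be positive reals with r_n = o(1), and fix a constant ℓ ∈ (0,1). Let C_n = {i : X_i ∈ [ℓ, ℓ+2 r_n] × [0,1]}, A_n = {i : X_i ∈ [0, ℓ) × [0,1]}, and B_n = {i : X_i ∈ (ℓ+2 r_n, 1] × [0,1]}. Then: (i) deterministically, for every i ∈ A_n and j ∈ B_n one has ‖X_i − X_j‖ > 2 r_n, so in the disk-model graph with radius r_n there is no edge between A_n and B_n; and (ii) for every constant ε > 0, with probability tending to 1 as n → ∞, |C_n| ≤ ε n, |A_n| ≥ (ℓ/4)·n, and |B_n| ≥ ((1−ℓ)/4)·n. (Hence a static secure sensor network under the disk model on the unit square with r_n = o(1) is splittable: capturing the o(n) nodes of C_n isolates two linear-size chunks from each other.) -/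

import Mathlib

open MeasureTheory Filter
open scoped ENNReal Topology

noncomputable section

/-- Euclidean distance on `ℝ²`. -/
def euclDist (x y : ℝ × ℝ) : ℝ :=
  Real.sqrt ((x.1 - y.1) ^ 2 + (x.2 - y.2) ^ 2)

/-- The unit square `[0,1]²` in `ℝ²`. -/
def squareSet : Set (ℝ × ℝ) := Set.Icc (0 : ℝ) 1 ×ˢ Set.Icc (0 : ℝ) 1

/-- The uniform probability measure on the unit square. -/
def squareMeasure : Measure (ℝ × ℝ) := volume.restrict squareSet

/-- The joint law of `n` independent uniform points in the unit square. -/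
def pointModel (n : ℕ) : Measure (Fin n → ℝ × ℝ) :=
  Measure.pi fun _ => squareMeasure

open ProbabilityTheory

instance : IsProbabilityMeasure squareMeasure := by
  constructor
  rw [squareMeasure, Measure.restrict_apply MeasurableSet.univ, Set.univ_inter, squareSet,
    Measure.volume_eq_prod, Measure.prod_prod, Real.volume_Icc]
  norm_num

instance (n : ℕ) : IsProbabilityMeasure (pointModel n) := by
  unfold pointModel; infer_instance

section AuxPi

variable {ι : Type*} [Fintype ι] {α : ι → Type*} [∀ i, MeasurableSpace (α i)]
  (μ : ∀ i, Measure (α i)) [∀ i, IsProbabilityMeasure (μ i)]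

lemma pi_eval_preimage (i : ι) (s : Set (α i)) :
    Measure.pi μ ((fun x : ∀ j, α j => x i) ⁻¹' s) = μ i s := by
  classical
  have : (fun x : ∀ j, α j => x i) ⁻¹' s
      = Set.pi Set.univ (Function.update (fun j => (Set.univ : Set (α j))) i s) :=
    Set.eval_preimage
  rw [this, Measure.pi_pi]
  have h : (fun j => μ j (Function.update (fun j => (Set.univ : Set (α j))) i s j))
      = Function.update (fun j => μ j Set.univ) i (μ i s) := by
    funext j
    by_cases hj : j = i
    · subst hj; simp
    · simp [Function.update_of_ne hj]
  rw [h, Finset.prod_update_of_mem (Finset.mem_univ i)]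
  simp

lemma iIndepFun_eval :
    ProbabilityTheory.iIndepFun
      (fun i (x : ∀ j, α j) => x i) (Measure.pi μ) := by
  classical
  rw [ProbabilityTheory.iIndepFun_iff_measure_inter_preimage_eq_mul]
  intro S sets _hsets
  have hinter : (⋂ i ∈ S, (fun x : ∀ j, α j => x i) ⁻¹' sets i)
      = Set.pi Set.univ (fun j => if j ∈ S then sets j else Set.univ) := by
    ext x
    simp only [Set.mem_iInter, Set.mem_preimage, Set.mem_pi, Set.mem_univ, forall_true_left]
    refine forall_congr' fun j => ?_
    by_cases hj : j ∈ S <;> simp [hj]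
  rw [hinter, Measure.pi_pi]
  have : (fun j => μ j (if j ∈ S then sets j else Set.univ))
      = fun j => if j ∈ S then μ j (sets j) else 1 := by
    funext j; by_cases hj : j ∈ S <;> simp [hj]
  rw [this, Finset.prod_ite_mem, Finset.univ_inter]
  exact Finset.prod_congr rfl fun i _ => (pi_eval_preimage μ i (sets i)).symm

end AuxPi

/-- Chebyshev bound for the number of points falling in a measurable set. -/
lemma count_dev_bound (n : ℕ) {S : Set (ℝ × ℝ)} (hS : MeasurableSet S) {c : ℝ} (hc : 0 < c) :
    pointModel n {X | c ≤ |(∑ i, Set.indicator S (1 : (ℝ × ℝ) → ℝ) (X i))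
        - n * (squareMeasure S).toReal|} ≤ ENNReal.ofReal (n / c ^ 2) := by
  set p : ℝ := (squareMeasure S).toReal with hp
  set Y : Fin n → (Fin n → ℝ × ℝ) → ℝ := fun i X => Set.indicator S 1 (X i) with hY
  have hYeq : ∀ i, Y i
      = Set.indicator ((fun X : Fin n → ℝ × ℝ => X i) ⁻¹' S) (fun _ => (1 : ℝ)) := by
    intro i; funext X
    by_cases h : X i ∈ S <;> simp [hY, Set.indicator_apply, Set.mem_preimage, h]
  have hmeasS : ∀ i, MeasurableSet ((fun X : Fin n → ℝ × ℝ => X i) ⁻¹' S) :=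
    fun i => (measurable_pi_apply i) hS
  have hmem : ∀ i, MemLp (Y i) 2 (pointModel n) := by
    intro i; rw [hYeq i]
    exact memLp_indicator_const 2 (hmeasS i) 1 (Or.inr (measure_ne_top _ _))
  have hint : ∀ i, ∫ X, Y i X ∂(pointModel n) = p := by
    intro i
    rw [hYeq i]
    have : ∫ X, Set.indicator ((fun X : Fin n → ℝ × ℝ => X i) ⁻¹' S)
        (1 : (Fin n → ℝ × ℝ) → ℝ) X ∂(pointModel n) = p := by
      rw [integral_indicator_one (hmeasS i)]
      rw [hp, pointModel, measureReal_def, pi_eval_preimage]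
    exact this
  have hsq : ∀ i, (Y i) ^ 2 = Y i := by
    intro i; funext X
    simp only [Pi.pow_apply, hY, Set.indicator_apply]
    by_cases h : X i ∈ S <;> simp [h]
  have hp0 : 0 ≤ p := ENNReal.toReal_nonneg
  have hp1 : p ≤ 1 := by
    have h1 := ENNReal.toReal_mono ENNReal.one_ne_top (prob_le_one (μ := squareMeasure) (s := S))
    simpa using h1
  have hvar : ∀ i, variance (Y i) (pointModel n) ≤ 1 := by
    intro i
    rw [variance_eq_sub (hmem i), hsq i]
    have : ∫ X, Y i X ∂(pointModel n) = p := hint i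
    rw [this]
    nlinarith
  have hindep : iIndepFun Y (pointModel n) := by
    have h := (iIndepFun_eval (fun _ : Fin n => squareMeasure)).comp
      (fun _ => Set.indicator S (1 : (ℝ × ℝ) → ℝ))
      (fun _ => measurable_const.indicator hS)
    exact h
  set N : (Fin n → ℝ × ℝ) → ℝ := ∑ i, Y i with hN
  have hNmem : MemLp N 2 (pointModel n) := memLp_finset_sum' _ fun i _ => hmem i
  have hEN : ∫ X, N X ∂(pointModel n) = n * p := by
    have : ∫ X, N X ∂(pointModel n) = ∑ i, ∫ X, Y i X ∂(pointModel n) := by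
      rw [hN]
      simp only [Finset.sum_apply]
      exact integral_finset_sum _ fun i _ => (hmem i).integrable one_le_two
    rw [this]
    simp [hint, Finset.sum_const]
  have hVarN : variance N (pointModel n) ≤ n := by
    rw [hN, IndepFun.variance_sum (fun i _ => hmem i)
      (fun i _ j _ hij => hindep.indepFun hij)]
    calc ∑ i, variance (Y i) (pointModel n) ≤ ∑ _i : Fin n, (1 : ℝ) :=
          Finset.sum_le_sum fun i _ => hvar i
      _ = n := by simp
  have hcheb := meas_ge_le_variance_div_sq (μ := pointModel n) hNmem hc
  rw [hEN] at hcheb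
  have hsub : {X : Fin n → ℝ × ℝ | c ≤ |(∑ i, Set.indicator S (1 : (ℝ × ℝ) → ℝ) (X i))
      - n * p|} = {ω | c ≤ |N ω - n * p|} := by
    ext X
    simp only [Set.mem_setOf_eq, hN, Finset.sum_apply]
    exact Iff.rfl
  rw [hsub]
  refine hcheb.trans (ENNReal.ofReal_le_ofReal ?_)
  gcongr

lemma ofReal_term_tendsto {δ : ℝ} (hδ : 0 < δ) :
    Tendsto (fun n : ℕ => ENNReal.ofReal (n / (δ * n) ^ 2)) atTop (𝓝 0) := by
  have h : Tendsto (fun n : ℕ => (n : ℝ) / (δ * n) ^ 2) atTop (𝓝 0) := by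
    have h1 : Tendsto (fun n : ℕ => (1 / δ ^ 2) * (1 / (n : ℝ))) atTop (𝓝 0) := by
      have := tendsto_one_div_atTop_nhds_zero_nat.const_mul (1 / δ ^ 2)
      simpa using this
    refine h1.congr' ?_
    filter_upwards [eventually_ge_atTop 1] with n hn
    have hn0 : (n : ℝ) ≠ 0 := by
      have : (1 : ℝ) ≤ n := by exact_mod_cast hn
      linarith
    field_simp
  have := ENNReal.tendsto_ofReal h
  simpa using this

theorem square_disk_splittable
    (r : ℕ → ℝ) (hrpos : ∀ n, 0 < r n) (hrlittleo : Tendsto r atTop (nhds 0))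
    (ℓ : ℝ) (hℓ0 : 0 < ℓ) (hℓ1 : ℓ < 1) :
    -- (i) no edge can exist between the two sides of the strip
    (∀ n : ℕ, ∀ x y : ℝ × ℝ,
      (0 ≤ x.1 ∧ x.1 < ℓ ∧ 0 ≤ x.2 ∧ x.2 ≤ 1) →
      (ℓ + 2 * r n < y.1 ∧ y.1 ≤ 1 ∧ 0 ≤ y.2 ∧ y.2 ≤ 1) →
      2 * r n < euclDist x y) ∧
    -- (ii) the strip has `o(n)` points, each side has linearly many points, whp
    (∀ ε : ℝ, 0 < ε →
      Tendsto
        (fun n => pointModel n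
          {X : Fin n → ℝ × ℝ |
            ((Finset.univ.filter fun i =>
              ℓ ≤ (X i).1 ∧ (X i).1 ≤ ℓ + 2 * r n ∧
              0 ≤ (X i).2 ∧ (X i).2 ≤ 1).card : ℝ) ≤ ε * n ∧
            (ℓ / 4) * n ≤
              ((Finset.univ.filter fun i =>
                0 ≤ (X i).1 ∧ (X i).1 < ℓ ∧
                0 ≤ (X i).2 ∧ (X i).2 ≤ 1).card : ℝ) ∧
            ((1 - ℓ) / 4) * n ≤
              ((Finset.univ.filter fun i =>
                ℓ + 2 * r n < (X i).1 ∧ (X i).1 ≤ 1 ∧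
                0 ≤ (X i).2 ∧ (X i).2 ≤ 1).card : ℝ)})
        atTop (nhds 1)) := by
  constructor
  · -- part (i)
    intro n x y hx hy
    obtain ⟨hx0, hxℓ, -, -⟩ := hx
    obtain ⟨hy1, hy2, -, -⟩ := hy
    calc 2 * r n < y.1 - x.1 := by linarith
      _ ≤ |x.1 - y.1| := by rw [abs_sub_comm]; exact (le_abs_self _)
      _ = Real.sqrt ((x.1 - y.1) ^ 2) := (Real.sqrt_sq_eq_abs _).symm
      _ ≤ Real.sqrt ((x.1 - y.1) ^ 2 + (x.2 - y.2) ^ 2) :=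
          Real.sqrt_le_sqrt (le_add_of_nonneg_right (sq_nonneg _))
      _ = euclDist x y := rfl
  · -- part (ii)
    intro ε hε
    -- the three strips
    set SA : Set (ℝ × ℝ) := Set.Ico (0 : ℝ) ℓ ×ˢ Set.Icc (0 : ℝ) 1 with hSA
    have hSAmeas : MeasurableSet SA := (measurableSet_Ico).prod measurableSet_Icc
    have hpA : (squareMeasure SA).toReal = ℓ := by
      have hsubA : Set.Ico (0 : ℝ) ℓ ∩ Set.Icc (0 : ℝ) 1 = Set.Ico (0 : ℝ) ℓ := by
        refine Set.inter_eq_left.mpr fun x hx => ?_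
        exact ⟨hx.1, le_trans hx.2.le hℓ1.le⟩
      rw [squareMeasure, Measure.restrict_apply hSAmeas, hSA, squareSet,
        Set.prod_inter_prod, Set.inter_self, hsubA,
        Measure.volume_eq_prod, Measure.prod_prod, Real.volume_Ico, Real.volume_Icc]
      simp [ENNReal.toReal_ofReal hℓ0.le]
    -- the deviation bound function
    set b : ℕ → ℝ≥0∞ := fun n =>
      ENNReal.ofReal (n / (ε / 2 * n) ^ 2) + ENNReal.ofReal (n / (ℓ / 2 * n) ^ 2)
        + ENNReal.ofReal (n / ((1 - ℓ) / 4 * n) ^ 2) with hb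
    have hbtend : Tendsto b atTop (𝓝 0) := by
      have h1 := ofReal_term_tendsto (δ := ε / 2) (by positivity)
      have h2 := ofReal_term_tendsto (δ := ℓ / 2) (by positivity)
      have h3 := ofReal_term_tendsto (δ := (1 - ℓ) / 4) (by linarith)
      have h := (h1.add h2).add h3
      simpa [hb] using h
    refine tendsto_of_tendsto_of_tendsto_of_le_of_le'
      (g := fun n => 1 - b n) (h := fun _ => (1 : ℝ≥0∞)) ?_ tendsto_const_nhds ?_ ?_
    · have := ENNReal.Tendsto.sub
        (tendsto_const_nhds : Tendsto (fun _ : ℕ => (1 : ℝ≥0∞)) atTop (𝓝 1))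
        hbtend (Or.inl ENNReal.one_ne_top)
      simpa using this
    · -- eventual lower bound
      have hrε : ∀ᶠ n in atTop, r n < ε / 4 :=
        hrlittleo.eventually (gt_mem_nhds (by positivity))
      have hrℓ : ∀ᶠ n in atTop, r n < (1 - ℓ) / 8 :=
        hrlittleo.eventually (gt_mem_nhds (by linarith : (0:ℝ) < (1 - ℓ) / 8))
      filter_upwards [eventually_ge_atTop 1, hrε, hrℓ] with n hn1 hrε hrℓ
      have hn0 : (0 : ℝ) < n := by exact_mod_cast hn1
      -- strips depending on n
      set SC : Set (ℝ × ℝ) := Set.Icc ℓ (ℓ + 2 * r n) ×ˢ Set.Icc (0 : ℝ) 1 with hSC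
      set SB : Set (ℝ × ℝ) := Set.Ioc (ℓ + 2 * r n) 1 ×ˢ Set.Icc (0 : ℝ) 1 with hSB
      have hSCmeas : MeasurableSet SC := measurableSet_Icc.prod measurableSet_Icc
      have hSBmeas : MeasurableSet SB := measurableSet_Ioc.prod measurableSet_Icc
      have hrn := hrpos n
      have hpC : (squareMeasure SC).toReal ≤ 2 * r n := by
        have h1 : squareMeasure SC ≤ ENNReal.ofReal (2 * r n) := by
          rw [squareMeasure, Measure.restrict_apply hSCmeas]
          refine le_trans (measure_mono Set.inter_subset_left) ?_
          rw [hSC, Measure.volume_eq_prod, Measure.prod_prod, Real.volume_Icc,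
            Real.volume_Icc]
          simp only [add_sub_cancel_left, sub_zero, ENNReal.ofReal_one, mul_one]
          exact le_rfl
        have := ENNReal.toReal_mono ENNReal.ofReal_ne_top h1
        rwa [ENNReal.toReal_ofReal (by positivity)] at this
      have hpB : (squareMeasure SB).toReal = 1 - ℓ - 2 * r n := by
        have hsubB : SB ⊆ squareSet := by
          rintro z ⟨hz1, hz2⟩
          exact ⟨⟨by nlinarith [hz1.1], hz1.2⟩, hz2⟩
        rw [squareMeasure, Measure.restrict_apply hSBmeas,
          Set.inter_eq_left.mpr hsubB, hSB, Measure.volume_eq_prod, Measure.prod_prod,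
          Real.volume_Ioc, Real.volume_Icc]
        simp only [sub_zero, ENNReal.ofReal_one, mul_one]
        rw [ENNReal.toReal_ofReal (by linarith)]
        ring
      -- card-to-sum conversions
      have hcard : ∀ (S : Set (ℝ × ℝ)) (P : (ℝ × ℝ) → Prop) [DecidablePred P]
          (hPS : ∀ z, P z ↔ z ∈ S) (X : Fin n → ℝ × ℝ),
          ((Finset.univ.filter fun i => P (X i)).card : ℝ)
            = ∑ i, Set.indicator S (1 : (ℝ × ℝ) → ℝ) (X i) := by
        intro S P _ hPS X
        classical
        rw [Finset.card_filter, Nat.cast_sum]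
        refine Finset.sum_congr rfl fun i _ => ?_
        rw [apply_ite ((↑) : ℕ → ℝ), Nat.cast_one, Nat.cast_zero, Set.indicator_apply]
        exact if_congr (hPS (X i)) rfl rfl
      have hcardC := hcard SC (fun z => ℓ ≤ z.1 ∧ z.1 ≤ ℓ + 2 * r n ∧ 0 ≤ z.2 ∧ z.2 ≤ 1)
        (fun z => by simp only [hSC, Set.mem_prod, Set.mem_Icc]; tauto)
      have hcardA := hcard SA (fun z => 0 ≤ z.1 ∧ z.1 < ℓ ∧ 0 ≤ z.2 ∧ z.2 ≤ 1)
        (fun z => by simp only [hSA, Set.mem_prod, Set.mem_Ico, Set.mem_Icc]; tauto)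
      have hcardB := hcard SB (fun z => ℓ + 2 * r n < z.1 ∧ z.1 ≤ 1 ∧ 0 ≤ z.2 ∧ z.2 ≤ 1)
        (fun z => by simp only [hSB, Set.mem_prod, Set.mem_Ioc, Set.mem_Icc]; tauto)
      -- inclusion of the complement into the deviation events
      have hsubset :
          {X : Fin n → ℝ × ℝ |
            ((Finset.univ.filter fun i =>
              ℓ ≤ (X i).1 ∧ (X i).1 ≤ ℓ + 2 * r n ∧
              0 ≤ (X i).2 ∧ (X i).2 ≤ 1).card : ℝ) ≤ ε * n ∧
            (ℓ / 4) * n ≤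
              ((Finset.univ.filter fun i =>
                0 ≤ (X i).1 ∧ (X i).1 < ℓ ∧
                0 ≤ (X i).2 ∧ (X i).2 ≤ 1).card : ℝ) ∧
            ((1 - ℓ) / 4) * n ≤
              ((Finset.univ.filter fun i =>
                ℓ + 2 * r n < (X i).1 ∧ (X i).1 ≤ 1 ∧
                0 ≤ (X i).2 ∧ (X i).2 ≤ 1).card : ℝ)}ᶜ ⊆
          {X : Fin n → ℝ × ℝ | ε / 2 * n ≤ |(∑ i, Set.indicator SC (1 : (ℝ × ℝ) → ℝ) (X i))
              - n * (squareMeasure SC).toReal|} ∪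
          ({X : Fin n → ℝ × ℝ | ℓ / 2 * n ≤ |(∑ i, Set.indicator SA (1 : (ℝ × ℝ) → ℝ) (X i))
              - n * (squareMeasure SA).toReal|} ∪
           {X : Fin n → ℝ × ℝ | (1 - ℓ) / 4 * n ≤
              |(∑ i, Set.indicator SB (1 : (ℝ × ℝ) → ℝ) (X i))
              - n * (squareMeasure SB).toReal|}) := by
        intro X hX
        simp only [Set.mem_compl_iff, Set.mem_setOf_eq, not_and_or, not_le] at hX
        rcases hX with h | h | h
        · left
          rw [hcardC X] at h
          simp only [Set.mem_setOf_eq]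
          have hmul : (n : ℝ) * (squareMeasure SC).toReal ≤ n * (ε / 2) := by
            have : (squareMeasure SC).toReal ≤ ε / 2 := by linarith
            exact mul_le_mul_of_nonneg_left this hn0.le
          refine le_trans ?_ (le_abs_self _)
          linarith
        · right; left
          rw [hcardA X] at h
          simp only [Set.mem_setOf_eq, hpA]
          have hℓn : (0 : ℝ) ≤ ℓ * n := by positivity
          refine le_abs.mpr (Or.inr ?_)
          nlinarith
        · right; right
          rw [hcardB X] at h
          simp only [Set.mem_setOf_eq, hpB]
          have hnr : (n : ℝ) * (2 * r n) ≤ n * ((1 - ℓ) / 4) := by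
            have : 2 * r n ≤ (1 - ℓ) / 4 := by linarith
            exact mul_le_mul_of_nonneg_left this hn0.le
          have h1ℓn : (0 : ℝ) ≤ (1 - ℓ) * n := by nlinarith
          refine le_abs.mpr (Or.inr ?_)
          nlinarith
      have hkey : pointModel n
          {X : Fin n → ℝ × ℝ |
            ((Finset.univ.filter fun i =>
              ℓ ≤ (X i).1 ∧ (X i).1 ≤ ℓ + 2 * r n ∧
              0 ≤ (X i).2 ∧ (X i).2 ≤ 1).card : ℝ) ≤ ε * n ∧
            (ℓ / 4) * n ≤
              ((Finset.univ.filter fun i =>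
                0 ≤ (X i).1 ∧ (X i).1 < ℓ ∧
                0 ≤ (X i).2 ∧ (X i).2 ≤ 1).card : ℝ) ∧
            ((1 - ℓ) / 4) * n ≤
              ((Finset.univ.filter fun i =>
                ℓ + 2 * r n < (X i).1 ∧ (X i).1 ≤ 1 ∧
                0 ≤ (X i).2 ∧ (X i).2 ≤ 1).card : ℝ)}ᶜ ≤ b n := by
        have hb3 : (0:ℝ) < (1 - ℓ) / 4 * n := by
          have : (0:ℝ) < (1 - ℓ) / 4 := by linarith
          positivity
        calc pointModel n _ ≤ _ := measure_mono hsubset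
          _ ≤ _ := le_trans (measure_union_le _ _)
              (add_le_add_right (measure_union_le _ _) _)
          _ ≤ ENNReal.ofReal (n / (ε / 2 * n) ^ 2)
              + (ENNReal.ofReal (n / (ℓ / 2 * n) ^ 2)
                + ENNReal.ofReal (n / ((1 - ℓ) / 4 * n) ^ 2)) :=
            add_le_add (count_dev_bound n hSCmeas (by positivity))
              (add_le_add (count_dev_bound n hSAmeas (by positivity))
                (count_dev_bound n hSBmeas hb3))
          _ = b n := by rw [hb, ← add_assoc]
      -- conclude the lower bound
      set E := {X : Fin n → ℝ × ℝ |
            ((Finset.univ.filter fun i =>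
              ℓ ≤ (X i).1 ∧ (X i).1 ≤ ℓ + 2 * r n ∧
              0 ≤ (X i).2 ∧ (X i).2 ≤ 1).card : ℝ) ≤ ε * n ∧
            (ℓ / 4) * n ≤
              ((Finset.univ.filter fun i =>
                0 ≤ (X i).1 ∧ (X i).1 < ℓ ∧
                0 ≤ (X i).2 ∧ (X i).2 ≤ 1).card : ℝ) ∧
            ((1 - ℓ) / 4) * n ≤
              ((Finset.univ.filter fun i =>
                ℓ + 2 * r n < (X i).1 ∧ (X i).1 ≤ 1 ∧
                0 ≤ (X i).2 ∧ (X i).2 ≤ 1).card : ℝ)} with hE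
      have h1 : (1 : ℝ≥0∞) ≤ pointModel n E + pointModel n Eᶜ := by
        have := measure_union_le (μ := pointModel n) E Eᶜ
        rwa [Set.union_compl_self, measure_univ] at this
      calc 1 - b n ≤ 1 - pointModel n Eᶜ := tsub_le_tsub_left hkey 1
        _ ≤ pointModel n E := tsub_le_iff_right.mpr h1
    · exact Eventually.of_forall fun n => prob_le_one
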